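/- If s is a rational number such that F(s,a) has no rational root a and the system L(s,a) = C(s,a) = 0 has no rational solution a, then the quintic P_s(x) has no monic quadratic factor x^2 + ax + b with a, b ∈ ℚ. -/
import Mathlib


noncomputable section
open Polynomial

def uu (s a : ℚ) : ℚ :=
  -3*a^2 + (12 - 4*s^2 - 2*s)*a + (-s^4 + 14*s^3 - 4*s^2 - 10*s - 1)

def vv (s a : ℚ) : ℚ :=
  a^4 + (2*s^2 + s - 6)*a^3 + (s^4 - 14*s^3 + 4*s^2 + 10*s + 1)*a^2
    + (s^5 + 10*s^4 + 4*s^3 - 14*s^2 + s)*a + (-6*s^5 + s^4 + 2*s^3)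

def mm (s a : ℚ) : ℚ := -2*a - 2*s^2 - s + 6

def nn (s a : ℚ) : ℚ :=
  a^3 + (2*s^2 + s - 6)*a^2 + (s^4 - 14*s^3 + 4*s^2 + 10*s + 1)*a
    + (s^5 + 10*s^4 + 4*s^3 - 14*s^2 + s)

def LL (s a : ℚ) : ℚ := nn s a - mm s a * uu s a

def CC (s a : ℚ) : ℚ := mm s a * vv s a + s^5

def FF (s a : ℚ) : ℚ :=
  CC s a ^ 2 + uu s a * LL s a * CC s a + vv s a * LL s a ^ 2

def Ppoly (s : ℚ) : Polynomial ℚ :=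
  X^5 + C ((2 + s) * (3 - 2*s)) * X^4
    + C (1 + 10*s + 4*s^2 - 14*s^3 + s^4) * X^3
    - C (s * (1 - 14*s + 4*s^2 + 10*s^3 + s^4)) * X^2
    - C (s^3 * (1 + 2*s) * (-2 + 3*s)) * X
    - C (s^5)

/-- quotient coefficients -/
def qq2 (s a : ℚ) : ℚ := (2 + s) * (3 - 2*s) - a
def qq1 (s a b : ℚ) : ℚ := (1 + 10*s + 4*s^2 - 14*s^3 + s^4) - a * qq2 s a - b
def qq0 (s a b : ℚ) : ℚ :=
  -(s * (1 - 14*s + 4*s^2 + 10*s^3 + s^4)) - a * qq1 s a b - b * qq2 s a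
def RR1 (s a b : ℚ) : ℚ := b^2 + uu s a * b + vv s a
def RR0 (s a b : ℚ) : ℚ := mm s a * RR1 s a b + LL s a * b - CC s a

lemma key (s a b : ℚ) :
    Ppoly s = (X^2 + C a * X + C b) *
        (X^3 + C (qq2 s a) * X^2 + C (qq1 s a b) * X + C (qq0 s a b))
      + (C (RR1 s a b) * X + C (RR0 s a b)) := by
  simp only [Ppoly, qq0, qq1, qq2, RR0, RR1, LL, _root_.CC, uu, vv, mm, nn]
  simp only [map_add, map_sub, map_mul, map_pow, map_neg, map_one, map_ofNat]
  ring

theorem stmt17 (s : ℚ)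
    (hF : ∀ a : ℚ, FF s a ≠ 0)
    (hLC : ∀ a : ℚ, ¬(LL s a = 0 ∧ CC s a = 0)) :
    ¬ ∃ a b : ℚ, (X^2 + C a * X + C b) ∣ Ppoly s := by
  rintro ⟨a, b, hdiv⟩
  have hq : (X^2 + C a * X + C b : ℚ[X]) ∣ (C (RR1 s a b) * X + C (RR0 s a b)) := by
    have := key s a b
    have h2 : (X^2 + C a * X + C b : ℚ[X]) ∣
        (X^2 + C a * X + C b) *
        (X^3 + C (qq2 s a) * X^2 + C (qq1 s a b) * X + C (qq0 s a b)) :=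
      Dvd.intro _ rfl
    have : (C (RR1 s a b) * X + C (RR0 s a b) : ℚ[X]) =
        Ppoly s - (X^2 + C a * X + C b) *
        (X^3 + C (qq2 s a) * X^2 + C (qq1 s a b) * X + C (qq0 s a b)) := by
      rw [key s a b]; ring
    rw [this]
    exact dvd_sub hdiv h2
  have hdeg : (X^2 + C a * X + C b : ℚ[X]).degree = 2 := by
    have : (X^2 + C a * X + C b : ℚ[X]) = C 1 * X^2 + C a * X + C b := by
      simp
    rw [this]
    exact degree_quadratic one_ne_zero
  have hrem : (C (RR1 s a b) * X + C (RR0 s a b) : ℚ[X]) = 0 := by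
    by_contra hne
    have hle := Polynomial.degree_le_of_dvd hq hne
    rw [hdeg] at hle
    have : (C (RR1 s a b) * X + C (RR0 s a b) : ℚ[X]).degree ≤ 1 :=
      degree_linear_le
    have := le_trans hle this
    norm_num at this
  have h1 : RR1 s a b = 0 := by
    have := congrArg (fun p => Polynomial.coeff p 1) hrem
    simpa using this
  have h0 : RR0 s a b = 0 := by
    have := congrArg (fun p => Polynomial.coeff p 0) hrem
    simpa using this
  have hLb : LL s a * b = CC s a := by
    have : mm s a * RR1 s a b + LL s a * b - CC s a = 0 := h0
    rw [h1] at this; linarith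
  by_cases hL : LL s a = 0
  · exact hLC a ⟨hL, by rw [← hLb, hL, zero_mul]⟩
  · apply hF a
    have : FF s a = LL s a ^ 2 * RR1 s a b := by
      simp only [FF, RR1]
      rw [← hLb]; ring
    rw [this, h1, mul_zero]
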